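/- For all positive integers T and N (with N, T > N_ℓ), the instance in which all remaining agents have exactly T active days is a worst case for the symmetric threshold-T policy against the state-dependent optimum: C(T, N) · SDOPT(T) ≤ C(T, T) · SDOPT(N), i.e., C(T, N)/SDOPT(N) ≤ C(T, T)/SDOPT(T). -/

import Mathlib

/-- Total cost of the symmetric threshold-`T` policy at the state with `ℓ` inactive
agents of total paid cost `D`, on the instance where every remaining agent has `n`
active days. -/
def thrCost (M B G ℓ D T n : ℕ) : ℕ :=
  if n < T then D + (M - ℓ) * n else D + (M - ℓ) * (T - 1) + min G ((M - ℓ) * B)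

/-- State-dependent offline optimum at that state on instance `n`. -/
def sdOpt (M B G ℓ D n : ℕ) : ℕ := D + min ((M - ℓ) * min n B) G

lemma mul_min_eq (k x B : ℕ) : k * min x B = min (k * x) (k * B) := by
  rcases le_total x B with h | h
  · rw [min_eq_left h, min_eq_left (Nat.mul_le_mul_left k h)]
  · rw [min_eq_right h, min_eq_right (Nat.mul_le_mul_left k h)]

/-- The instance in which all remaining agents have exactly `T` active days is a worst
case for the symmetric threshold-`T` policy against the state-dependent optimum. -/
theorem stmt17 (M B G ℓ : ℕ) (hM : 2 ≤ M) (hB : 1 ≤ B)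
    (hBG : B < G) (hGMB : G < M * B) (hℓ : ℓ ≤ M - 1)
    (N : ℕ → ℕ) (hN0 : N 0 = 0)
    (hNpos : ∀ n, 1 ≤ n → n ≤ ℓ → 0 < N n)
    (hNmono : ∀ i j, 1 ≤ i → i ≤ j → j ≤ ℓ → N i ≤ N j)
    (D : ℕ) (hD : D = ∑ n ∈ Finset.Icc 1 ℓ, N n) :
    ∀ T n : ℕ, N ℓ < T → N ℓ < n →
      thrCost M B G ℓ D T n * sdOpt M B G ℓ D T ≤
        thrCost M B G ℓ D T T * sdOpt M B G ℓ D n := by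
  intro T n hT hn
  set k := M - ℓ with hk
  have hk1 : 1 ≤ k := by omega
  unfold thrCost sdOpt
  rw [if_neg (lt_irrefl T)]
  by_cases h : n < T
  · rw [if_pos h]
    set c := min (k * B) G with hc
    have hminT : min (k * min T B) G = min (k * T) c := by
      rw [mul_min_eq, hc, min_assoc]
    have hminn : min (k * min n B) G = min (k * n) c := by
      rw [mul_min_eq, hc, min_assoc]
    rw [hminT, hminn]
    have hGc : min G (k * B) = c := by rw [hc, min_comm]
    rw [hGc]
    rcases le_or_gt (k * n) c with hle | hlt
    · -- sdOpt n = D + k*n; pair (D+k*n) with itself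
      rw [min_eq_left hle]
      have h2 : D + min (k * T) c ≤ D + k * (T - 1) + c := by
        have : min (k * T) c ≤ c := min_le_right _ _
        omega
      calc (D + k * n) * (D + min (k * T) c)
          ≤ (D + k * n) * (D + k * (T - 1) + c) := Nat.mul_le_mul_left _ h2
        _ = (D + k * (T - 1) + c) * (D + k * n) := mul_comm _ _
    · -- both sdOpts equal D + c
      have hTc : min (k * T) c = c := by
        have : k * n ≤ k * T := Nat.mul_le_mul_left k (le_of_lt h)
        exact min_eq_right (by omega)
      have hnc : min (k * n) c = c := min_eq_right (le_of_lt hlt)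
      rw [hTc, hnc]
      have h1 : D + k * n ≤ D + k * (T - 1) + c := by
        have : k * n ≤ k * (T - 1) := Nat.mul_le_mul_left k (by omega)
        omega
      exact Nat.mul_le_mul_right _ h1
  · rw [if_neg h]
    apply Nat.mul_le_mul_left
    have : min T B ≤ min n B := min_le_min (by omega) le_rfl
    have h2 := Nat.mul_le_mul_left k this
    exact Nat.add_le_add_left (min_le_min h2 le_rfl) D
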